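/- Let a₁,...,a_k be positive integers with a₁ = 1 and let A = a₁ + ... + a_k. The 2-colouring of the real interval [1, A² + A − 1) defined by R = [1, A) ∪ [A², A² + A − 1) and B = [A, A²) has no x₁,...,x_k, y all in R with a₁x₁ + ... + a_kx_k = y, and no x₁,...,x_k, y all in B with a₁x₁ + ... + a_kx_k = y. -/
import Mathlib


theorem stmt_8 (k : ℕ) (hk : 0 < k) (a : Fin k → ℕ) (ha : ∀ i, 0 < a i)
    (ha1 : a ⟨0, hk⟩ = 1) (A : ℝ) (hA : A = ∑ i, (a i : ℝ)) :
    (¬ ∃ (x : Fin k → ℝ) (y : ℝ),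
        (∀ i, (1 ≤ x i ∧ x i < A) ∨ (A^2 ≤ x i ∧ x i < A^2 + A - 1)) ∧
        ((1 ≤ y ∧ y < A) ∨ (A^2 ≤ y ∧ y < A^2 + A - 1)) ∧
        ∑ i, (a i : ℝ) * x i = y) ∧
    (¬ ∃ (x : Fin k → ℝ) (y : ℝ),
        (∀ i, A ≤ x i ∧ x i < A^2) ∧ (A ≤ y ∧ y < A^2) ∧
        ∑ i, (a i : ℝ) * x i = y) := by
  have hApos : ∀ i, (1:ℝ) ≤ a i := fun i => by exact_mod_cast ha i
  have hne : (Finset.univ : Finset (Fin k)).Nonempty := by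
    simpa [Finset.univ_nonempty_iff] using Fin.pos_iff_nonempty.mp hk
  have hA1 : 1 ≤ A := by
    rw [hA]
    calc (1:ℝ) ≤ ∑ _i : Fin k, (1:ℝ) := by
          rw [Finset.sum_const]; simp
          exact_mod_cast hk
      _ ≤ ∑ i, (a i : ℝ) := Finset.sum_le_sum fun i _ => hApos i
  have hA2 : 1 ≤ A^2 := by nlinarith
  constructor
  · rintro ⟨x, y, hx, hy, hsum⟩
    have hx1 : ∀ i, 1 ≤ x i := fun i => by
      rcases hx i with ⟨h, _⟩ | ⟨h, _⟩
      · exact h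
      · linarith
    by_cases hall : ∀ i, x i < A
    · have hge : A ≤ y := by
        rw [← hsum, hA]
        exact Finset.sum_le_sum fun i _ =>
          le_mul_of_one_le_right (by positivity) (hx1 i)
      have hlt : y < A^2 := by
        rw [← hsum]
        have h1 : ∑ i, (a i:ℝ) * x i < ∑ i, (a i:ℝ) * A :=
          Finset.sum_lt_sum_of_nonempty hne fun i _ =>
            mul_lt_mul_of_pos_left (hall i) (by exact_mod_cast ha i)
        have h2 : ∑ i, (a i:ℝ) * A = A^2 := by
          rw [← Finset.sum_mul, ← hA]; ring
        linarith
      rcases hy with ⟨_, h⟩ | ⟨h, _⟩ <;> linarith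
    · push_neg at hall
      obtain ⟨j, hj⟩ := hall
      have hxj : A^2 ≤ x j := by
        rcases hx j with ⟨_, h⟩ | ⟨h, _⟩
        · linarith
        · exact h
      have key : A^2 + A - 1 ≤ y := by
        rw [← hsum, ← Finset.sum_erase_add _ _ (Finset.mem_univ j)]
        have h1 : ∑ i ∈ Finset.univ.erase j, (a i:ℝ)
            ≤ ∑ i ∈ Finset.univ.erase j, (a i:ℝ) * x i :=
          Finset.sum_le_sum fun i _ =>
            le_mul_of_one_le_right (by positivity) (hx1 i)
        have h2 : (a j:ℝ) * A^2 ≤ (a j:ℝ) * x j :=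
          mul_le_mul_of_nonneg_left hxj (by positivity)
        have h3 : ∑ i ∈ Finset.univ.erase j, (a i:ℝ) = A - a j := by
          have := Finset.sum_erase_add Finset.univ (fun i => (a i:ℝ)) (Finset.mem_univ j)
          rw [hA]; linarith
        have haj : (1:ℝ) ≤ a j := hApos j
        nlinarith [mul_nonneg (by linarith : (0:ℝ) ≤ (a j:ℝ) - 1)
          (by linarith : (0:ℝ) ≤ A^2 - 1)]
      rcases hy with ⟨_, h⟩ | ⟨_, h⟩ <;> linarith
  · rintro ⟨x, y, hx, hy, hsum⟩
    have hge : A^2 ≤ y := by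
      rw [← hsum]
      have h2 : ∑ i, (a i:ℝ) * A = A^2 := by
        rw [← Finset.sum_mul, ← hA]; ring
      rw [← h2]
      exact Finset.sum_le_sum fun i _ =>
        mul_le_mul_of_nonneg_left (hx i).1 (by positivity)
    linarith [hy.2]
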